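/- arXiv:2004.07774 — 5 statements merged into one kernel-verified Lean document; each statement's English description precedes it below -/
import Mathlib

section
/- Let K be a differential field. Elements a₁, …, aₙ ∈ K are linearly dependent over the field of constants Const(K) if and only if the Wronskian determinant det(Wrn(a₁, …, aₙ)) = 0, where Wrn(a₁, …, aₙ) is the n×n matrix whose (i,j) entry is δ^{i-1}(aⱼ). -/
open Matrix Finset

private lemma wronskian_dz {K : Type*} [Field K] {δ : K → K}
    (hadd : ∀ x y, δ (x + y) = δ x + δ y) : δ 0 = 0 := by
  have h : δ 0 = δ 0 + δ 0 := by simpa using (hadd 0 0).symm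
  exact (right_eq_add.mp h)

private lemma wronskian_dsum {K : Type*} [Field K] {δ : K → K}
    (hadd : ∀ x y, δ (x + y) = δ x + δ y) {ι : Type*} (s : Finset ι) (f : ι → K) :
    δ (∑ x ∈ s, f x) = ∑ x ∈ s, δ (f x) := by
  induction s using Finset.cons_induction with
  | empty => simpa using wronskian_dz hadd
  | cons a s ha ih => rw [Finset.sum_cons, Finset.sum_cons, hadd, ih]

private lemma wronskian_rev {K : Type*} [Field K] (δ : K → K)
    (hadd : ∀ x y, δ (x + y) = δ x + δ y)
    (hmul : ∀ x y, δ (x * y) = δ x * y + x * δ y) :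
    ∀ (n : ℕ) (a : Fin n → K),
      (Matrix.of fun i j : Fin n => δ^[(i : ℕ)] (a j)).det = 0 →
      ∃ c : Fin n → K, (∀ i, δ (c i) = 0) ∧ c ≠ 0 ∧ ∑ i, c i * a i = 0 := by
  have hdz := wronskian_dz hadd
  have hd1 : δ 1 = 0 := by
    have h : δ 1 = δ 1 + δ 1 := by simpa using (hmul 1 1).symm
    exact (right_eq_add.mp h)
  intro n
  induction n with
  | zero =>
    intro a h
    rw [Matrix.det_fin_zero] at h
    exact absurd h one_ne_zero
  | succ n ih =>
    intro a hdet
    by_cases h' : (Matrix.of fun i j : Fin n => δ^[(i : ℕ)] (a (Fin.castSucc j))).det = 0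
    · obtain ⟨c, hc, hc0, hsum⟩ := ih (fun j => a (Fin.castSucc j)) h'
      refine ⟨Fin.snoc c 0, ?_, ?_, ?_⟩
      · intro i
        induction i using Fin.lastCases with
        | last => simpa using hdz
        | cast i => simpa using hc i
      · intro h
        apply hc0
        funext j
        have := congrFun h (Fin.castSucc j)
        simpa using this
      · rw [Fin.sum_univ_castSucc]
        simpa using hsum
    · set M : Matrix (Fin (n + 1)) (Fin (n + 1)) K :=
        Matrix.of fun i j => δ^[(i : ℕ)] (a j) with hM
      set x : K := M.adjugate (Fin.last n) (Fin.last n) with hx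
      set v : Fin (n + 1) → K := fun j => M.adjugate j (Fin.last n) with hv
      -- kernel equations
      have hker : ∀ i : Fin (n + 1), ∑ j, v j * δ^[(i : ℕ)] (a j) = 0 := by
        intro i
        have h1 : (M * M.adjugate) i (Fin.last n) = 0 := by
          rw [Matrix.mul_adjugate, hdet]; simp
        rw [Matrix.mul_apply] at h1
        calc ∑ j, v j * δ^[(i : ℕ)] (a j)
            = ∑ j, M i j * M.adjugate j (Fin.last n) := by
              refine Finset.sum_congr rfl fun j _ => ?_
              rw [mul_comm]; rfl
          _ = 0 := h1
      have hkerN : ∀ k : ℕ, k ≤ n → ∑ j, v j * δ^[k] (a j) = 0 := fun k hk =>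
        hker ⟨k, Nat.lt_succ_of_le hk⟩
      -- v last ≠ 0
      have hvlast : v (Fin.last n)
          = (Matrix.of fun i j : Fin n => δ^[(i : ℕ)] (a (Fin.castSucc j))).det := by
        rw [hv]
        simp only
        rw [Matrix.adjugate_apply, Matrix.det_succ_row _ (Fin.last n)]
        rw [Finset.sum_eq_single (Fin.last n)]
        · rw [Matrix.updateRow_self, Pi.single_eq_same]
          have he : ((-1 : K)) ^ ((Fin.last n : ℕ) + (Fin.last n : ℕ)) = 1 :=
            Even.neg_one_pow ⟨n, rfl⟩
          rw [he, one_mul, one_mul]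
          congr 1
          ext i j
          simp [Fin.succAbove_last, Matrix.updateRow_ne (Fin.castSucc_lt_last i).ne, hM]
        · intro j _ hj
          rw [Matrix.updateRow_self, Pi.single_eq_of_ne hj, mul_zero, zero_mul]
        · intro h; exact absurd (Finset.mem_univ _) h
      have hvl : v (Fin.last n) ≠ 0 := by rw [hvlast]; exact h'
      -- derivative of kernel equations
      have hker' : ∀ i : Fin n, ∑ j, δ (v j) * δ^[(i : ℕ)] (a j) = 0 := by
        intro i
        have h0 : ∑ j, (δ (v j) * δ^[(i : ℕ)] (a j) + v j * δ (δ^[(i : ℕ)] (a j))) = 0 := by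
          have h1 := congrArg δ (hkerN i (le_of_lt i.isLt))
          rw [wronskian_dsum hadd, hdz] at h1
          simpa [hmul] using h1
        rw [Finset.sum_add_distrib] at h0
        have h2 : ∑ j, v j * δ (δ^[(i : ℕ)] (a j)) = 0 := by
          have h3 := hkerN ((i : ℕ) + 1) (Nat.succ_le_of_lt i.isLt)
          simpa [Function.iterate_succ_apply'] using h3
        rw [h2, add_zero] at h0
        exact h0
      set u : Fin (n + 1) → K :=
        fun j => δ (v j) * v (Fin.last n) - v j * δ (v (Fin.last n)) with hu
      have hulast : u (Fin.last n) = 0 := by rw [hu]; ring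
      have hukernel : ∀ i : Fin n,
          ∑ j : Fin n, u (Fin.castSucc j) * δ^[(i : ℕ)] (a (Fin.castSucc j)) = 0 := by
        intro i
        have hfull : ∑ j : Fin (n + 1), u j * δ^[(i : ℕ)] (a j) = 0 := by
          simp only [hu, sub_mul]
          rw [Finset.sum_sub_distrib]
          have e1 : ∑ j, δ (v j) * v (Fin.last n) * δ^[(i : ℕ)] (a j)
              = v (Fin.last n) * ∑ j, δ (v j) * δ^[(i : ℕ)] (a j) := by
            rw [Finset.mul_sum]; exact Finset.sum_congr rfl fun j _ => by ring
          have e2 : ∑ j, v j * δ (v (Fin.last n)) * δ^[(i : ℕ)] (a j)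
              = δ (v (Fin.last n)) * ∑ j, v j * δ^[(i : ℕ)] (a j) := by
            rw [Finset.mul_sum]; exact Finset.sum_congr rfl fun j _ => by ring
          rw [e1, e2, hker' i, hkerN i (le_of_lt i.isLt), mul_zero, mul_zero, sub_zero]
        rw [Fin.sum_univ_castSucc, hulast, zero_mul, add_zero] at hfull
        exact hfull
      have hu0 : ∀ j : Fin n, u (Fin.castSucc j) = 0 := by
        by_contra hcon
        push_neg at hcon
        obtain ⟨j0, hj0⟩ := hcon
        apply h'
        rw [← Matrix.exists_mulVec_eq_zero_iff]
        refine ⟨fun j => u (Fin.castSucc j), ?_, ?_⟩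
        · exact Function.ne_iff.mpr ⟨j0, hj0⟩
        · funext i
          show ∑ j, δ^[(i : ℕ)] (a (Fin.castSucc j)) * u (Fin.castSucc j) = 0
          calc ∑ j, δ^[(i : ℕ)] (a (Fin.castSucc j)) * u (Fin.castSucc j)
              = ∑ j : Fin n, u (Fin.castSucc j) * δ^[(i : ℕ)] (a (Fin.castSucc j)) :=
                Finset.sum_congr rfl fun j _ => mul_comm _ _
            _ = 0 := hukernel i
      have huall : ∀ j : Fin (n + 1), δ (v j) * v (Fin.last n) = v j * δ (v (Fin.last n)) := by
        intro j
        induction j using Fin.lastCases with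
        | last => exact sub_eq_zero.mp hulast
        | cast j => exact sub_eq_zero.mp (hu0 j)
      -- inverse derivative
      have hinv : δ ((v (Fin.last n))⁻¹)
          = -(δ (v (Fin.last n)) * (v (Fin.last n))⁻¹ * (v (Fin.last n))⁻¹) := by
        have h3 : δ ((v (Fin.last n))⁻¹ * v (Fin.last n)) = 0 := by
          rw [inv_mul_cancel₀ hvl]; exact hd1
        rw [hmul] at h3
        have h5 : δ ((v (Fin.last n))⁻¹) * v (Fin.last n)
            = -((v (Fin.last n))⁻¹ * δ (v (Fin.last n))) := eq_neg_of_add_eq_zero_left h3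
        have h6 : δ ((v (Fin.last n))⁻¹)
            = δ ((v (Fin.last n))⁻¹) * v (Fin.last n) * (v (Fin.last n))⁻¹ := by
          rw [mul_assoc, mul_inv_cancel₀ hvl, mul_one]
        rw [h6, h5]; ring
      refine ⟨fun j => v j * (v (Fin.last n))⁻¹, ?_, ?_, ?_⟩
      · intro j
        have h4 := huall j
        rw [hmul, hinv]
        have e : δ (v j) = v j * δ (v (Fin.last n)) * (v (Fin.last n))⁻¹ := by
          rw [← h4, mul_assoc, mul_inv_cancel₀ hvl, mul_one]
        rw [e]; ring
      · intro h
        have h5 := congrFun h (Fin.last n)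
        rw [mul_inv_cancel₀ hvl] at h5
        exact one_ne_zero h5
      · have h6 := hkerN 0 (Nat.zero_le n)
        simp only [Function.iterate_zero, id_eq] at h6
        calc ∑ j, v j * (v (Fin.last n))⁻¹ * a j
            = (v (Fin.last n))⁻¹ * ∑ j, v j * a j := by
              rw [Finset.mul_sum]; exact Finset.sum_congr rfl fun j _ => by ring
          _ = 0 := by rw [h6, mul_zero]

/-- In a differential field, elements `a₁, …, aₙ` are linearly dependent over the field of
constants iff the determinant of their Wronskian matrix vanishes. -/
theorem linearDependent_over_constants_iff_wronskian_det_eq_zero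
    {K : Type*} [Field K] (δ : K → K)
    (hadd : ∀ x y, δ (x + y) = δ x + δ y)
    (hmul : ∀ x y, δ (x * y) = δ x * y + x * δ y)
    (n : ℕ) (a : Fin n → K) :
    (∃ c : Fin n → K, (∀ i, δ (c i) = 0) ∧ c ≠ 0 ∧ ∑ i, c i * a i = 0) ↔
      (Matrix.of fun i j : Fin n => δ^[(i : ℕ)] (a j)).det = 0 := by
  constructor
  · rintro ⟨c, hc, hc0, hsum⟩
    rw [← Matrix.exists_mulVec_eq_zero_iff]
    refine ⟨c, hc0, ?_⟩
    have key : ∀ k : ℕ, ∑ j, c j * δ^[k] (a j) = 0 := by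
      intro k
      induction k with
      | zero => simpa using hsum
      | succ k ihk =>
        have h1 := congrArg δ ihk
        rw [wronskian_dsum hadd, wronskian_dz hadd] at h1
        calc ∑ j, c j * δ^[k + 1] (a j)
            = ∑ j, δ (c j * δ^[k] (a j)) := by
              refine Finset.sum_congr rfl fun j _ => ?_
              rw [hmul, hc j, zero_mul, zero_add, Function.iterate_succ_apply']
          _ = 0 := h1
    funext i
    show ∑ j, δ^[(i : ℕ)] (a j) * c j = 0
    calc ∑ j, δ^[(i : ℕ)] (a j) * c j = ∑ j, c j * δ^[(i : ℕ)] (a j) :=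
          Finset.sum_congr rfl fun j _ => mul_comm _ _
      _ = 0 := key i
  · exact wronskian_rev δ hadd hmul n a
end

section
/- Let K be a differential field with field of constants C = Const(K). The right kernel of the Wronskian matrix Wrn(a₁, …, aₙ) of elements a₁, …, aₙ ∈ K, viewed as a K-subspace of K^n, is spanned by vectors with entries in C; i.e., the kernel is defined over the constants. -/
open Matrix Finset Submodule
open scoped Classical

section WronskianKernel

variable {K : Type*} [Field K]

private lemma wk_d0 (δ : K → K) (hadd : ∀ x y, δ (x + y) = δ x + δ y) : δ 0 = 0 := by
  have h : δ 0 + δ 0 = δ 0 := by rw [← hadd]; norm_num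
  exact add_left_cancel (h.trans (add_zero _).symm)

private lemma wk_d1 (δ : K → K) (hmul : ∀ x y, δ (x * y) = δ x * y + x * δ y) : δ 1 = 0 := by
  have h := hmul 1 1
  simp only [mul_one, one_mul] at h
  exact add_left_cancel (h.symm.trans (add_zero _).symm)

private lemma wk_dsum (δ : K → K) (hadd : ∀ x y, δ (x + y) = δ x + δ y)
    {ι : Type*} (s : Finset ι) (f : ι → K) :
    δ (∑ j ∈ s, f j) = ∑ j ∈ s, δ (f j) := by
  classical
  induction s using Finset.cons_induction with
  | empty => simpa using wk_d0 δ hadd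
  | cons i s hi ih => rw [Finset.sum_cons, Finset.sum_cons, hadd, ih]

/-- Key stability: the kernel of the Wronskian matrix is closed under componentwise
derivation. -/
private lemma wk_ker_stable (δ : K → K)
    (hadd : ∀ x y, δ (x + y) = δ x + δ y)
    (hmul : ∀ x y, δ (x * y) = δ x * y + x * δ y)
    (n : ℕ) (a : Fin n → K) (v : Fin n → K)
    (hv : ∀ i : Fin n, ∑ j, δ^[(i : ℕ)] (a j) * v j = 0) :
    ∀ i : Fin n, ∑ j, δ^[(i : ℕ)] (a j) * δ (v j) = 0 := by
  classical
  set r : ℕ → Fin n → K := fun k j => δ^[k] (a j) with hr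
  set V : ℕ → Submodule K (Fin n → K) := fun k => Submodule.span K (r '' Set.Iio k) with hV
  have hd0 := wk_d0 δ hadd
  have hrsucc : ∀ (k : ℕ) (j : Fin n), r (k + 1) j = δ (r k j) := fun k j =>
    Function.iterate_succ_apply' δ k (a j)
  have hVle : ∀ {k l : ℕ}, k ≤ l → V k ≤ V l := fun h =>
    Submodule.span_mono (Set.image_mono (fun x hx => lt_of_lt_of_le hx h))
  have hrmem : ∀ {k l : ℕ}, k < l → r k ∈ V l := fun h => Submodule.subset_span ⟨_, h, rfl⟩
  -- derivation maps V k into V (k+1)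
  have hD : ∀ (k : ℕ) (w : Fin n → K), w ∈ V k → (fun j => δ (w j)) ∈ V (k + 1) := by
    intro k w hw
    induction hw using Submodule.span_induction with
    | mem x hx =>
      obtain ⟨m, hm, rfl⟩ := hx
      have : (fun j => δ (r m j)) = r (m + 1) := funext fun j => (hrsucc m j).symm
      rw [this]
      exact hrmem (Nat.succ_lt_succ hm)
    | zero =>
      have : (fun j : Fin n => δ ((0 : Fin n → K) j)) = 0 := funext fun j => by simp [hd0]
      rw [this]; exact (V (k + 1)).zero_mem
    | add x y hx hy ihx ihy =>
      have : (fun j => δ ((x + y) j)) = (fun j => δ (x j)) + fun j => δ (y j) :=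
        funext fun j => by simpa using hadd (x j) (y j)
      rw [this]; exact (V (k + 1)).add_mem ihx ihy
    | smul c x hx ihx =>
      have : (fun j => δ ((c • x) j)) = δ c • x + c • fun j => δ (x j) :=
        funext fun j => by simpa using hmul c (x j)
      rw [this]
      exact (V (k + 1)).add_mem ((V (k + 1)).smul_mem _ (hVle (Nat.le_succ k) hx))
        ((V (k + 1)).smul_mem _ ihx)
  -- there is k ≤ n with r k ∈ V k
  have hkex : ∃ k ≤ n, r k ∈ V k := by
    by_contra h
    push_neg at h
    have hlt : ∀ k ≤ n, V k < V (k + 1) := by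
      intro k hk
      refine lt_of_le_of_ne (hVle (Nat.le_succ k)) fun he => h k hk ?_
      rw [he]; exact hrmem (Nat.lt_succ_self k)
    have hrank : ∀ k ≤ n + 1, k ≤ Module.finrank K (V k) := by
      intro k hk
      induction k with
      | zero => simp
      | succ m ih =>
        have h1 : m ≤ n := by omega
        have h2 := Submodule.finrank_lt_finrank_of_lt (hlt m h1)
        have h3 := ih (by omega)
        omega
    have h1 := hrank (n + 1) le_rfl
    have h2 : Module.finrank K (V (n + 1)) ≤ Module.finrank K (Fin n → K) :=
      Submodule.finrank_le _
    rw [Module.finrank_fin_fun] at h2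
    omega
  obtain ⟨k, hkn, hk⟩ := hkex
  have hVk1 : V (k + 1) ≤ V k := by
    apply Submodule.span_le.mpr
    rintro x ⟨m, hm, rfl⟩
    rcases Nat.lt_succ_iff_lt_or_eq.mp hm with h | rfl
    · exact hrmem h
    · exact hk
  have hall : ∀ t, r (k + t) ∈ V k := by
    intro t
    induction t with
    | zero => simpa using hk
    | succ m ih =>
      have h1 := hD k _ ih
      have heq : (fun j => δ (r (k + m) j)) = r (k + m + 1) := funext fun j => (hrsucc _ j).symm
      rw [heq] at h1
      exact hVk1 h1
  have hφV : ∀ w ∈ V n, ∑ j, w j * v j = 0 := by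
    intro w hw
    induction hw using Submodule.span_induction with
    | mem x hx => obtain ⟨m, hm, rfl⟩ := hx; exact hv ⟨m, hm⟩
    | zero => simp
    | add x y hx hy ihx ihy =>
      simp only [Pi.add_apply, add_mul, Finset.sum_add_distrib, ihx, ihy, add_zero]
    | smul c x hx ihx =>
      simp only [Pi.smul_apply, smul_eq_mul, mul_assoc, ← Finset.mul_sum, ihx, mul_zero]
  have hφ : ∀ m : ℕ, ∑ j, r m j * v j = 0 := by
    intro m
    by_cases hm : m < n
    · exact hv ⟨m, hm⟩
    · have hmk : m = k + (m - k) := by omega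
      have : r m ∈ V k := by rw [hmk]; exact hall _
      exact hφV _ (hVle hkn this)
  intro i
  have h1 : δ (∑ j, r (i : ℕ) j * v j) = 0 := by rw [hv i, hd0]
  rw [wk_dsum δ hadd] at h1
  have h2 : ∀ j, δ (r (i : ℕ) j * v j) = r ((i : ℕ) + 1) j * v j + r (i : ℕ) j * δ (v j) :=
    fun j => by rw [hmul, hrsucc]
  simp only [h2, Finset.sum_add_distrib, hφ ((i : ℕ) + 1), zero_add] at h1
  exact h1

/-- For a nonzero kernel vector `v` with `v i₀ ≠ 0`, there is a constant kernel vector `c`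
with `c i₀ = 1` whose support is contained in that of `v`. -/
private lemma wk_exists_const (δ : K → K)
    (hadd : ∀ x y, δ (x + y) = δ x + δ y)
    (hmul : ∀ x y, δ (x * y) = δ x * y + x * δ y)
    (n : ℕ) (a : Fin n → K) :
    ∀ (m : ℕ) (v : Fin n → K),
      (Finset.univ.filter fun j => v j ≠ 0).card ≤ m →
      (∀ i : Fin n, ∑ j, δ^[(i : ℕ)] (a j) * v j = 0) →
      ∀ i₀, v i₀ ≠ 0 →
      ∃ c : Fin n → K,
        (∀ i : Fin n, ∑ j, δ^[(i : ℕ)] (a j) * c j = 0) ∧ (∀ i, δ (c i) = 0) ∧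
          c i₀ = 1 ∧ ∀ j, v j = 0 → c j = 0 := by
  intro m
  induction m with
  | zero =>
    intro v hcard hv i₀ hi₀
    exfalso
    have hmem : i₀ ∈ Finset.univ.filter fun j => v j ≠ 0 := by simp [hi₀]
    have := Finset.card_pos.mpr ⟨i₀, hmem⟩
    omega
  | succ m ih =>
    intro v hcard hv i₀ hi₀
    set u : Fin n → K := fun j => (v i₀)⁻¹ * v j with hu
    have hu0 : ∀ i : Fin n, ∑ j, δ^[(i : ℕ)] (a j) * u j = 0 := by
      intro i
      have h1 : ∑ j, δ^[(i : ℕ)] (a j) * u j = (v i₀)⁻¹ * ∑ j, δ^[(i : ℕ)] (a j) * v j := by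
        rw [Finset.mul_sum]
        exact Finset.sum_congr rfl fun j _ => by simp only [hu]; ring
      rw [h1, hv i, mul_zero]
    have hui₀ : u i₀ = 1 := inv_mul_cancel₀ hi₀
    have husupp : ∀ j, v j = 0 → u j = 0 := fun j h => by simp [hu, h]
    set w : Fin n → K := fun j => δ (u j) with hw
    have hw0 : ∀ i : Fin n, ∑ j, δ^[(i : ℕ)] (a j) * w j = 0 :=
      wk_ker_stable δ hadd hmul n a u hu0
    have hwi₀ : w i₀ = 0 := by rw [hw]; simp only; rw [hui₀]; exact wk_d1 δ hmul
    have hwsupp : ∀ j, u j = 0 → w j = 0 := fun j h => by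
      rw [hw]; simp only; rw [h]; exact wk_d0 δ hadd
    by_cases hwz : ∀ j, w j = 0
    · exact ⟨u, hu0, hwz, hui₀, husupp⟩
    · push_neg at hwz
      obtain ⟨j₀, hj₀⟩ := hwz
      have huj₀ : u j₀ ≠ 0 := fun h => hj₀ (hwsupp _ h)
      have hvj₀ : v j₀ ≠ 0 := fun h => huj₀ (husupp _ h)
      have hmemv : i₀ ∈ Finset.univ.filter fun j => v j ≠ 0 := by simp [hi₀]
      have hsub : (Finset.univ.filter fun j => w j ≠ 0) ⊆
          (Finset.univ.filter fun j => v j ≠ 0).erase i₀ := by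
        intro j hj
        simp only [Finset.mem_filter, Finset.mem_univ, true_and] at hj
        refine Finset.mem_erase.mpr ⟨?_, ?_⟩
        · rintro rfl; exact hj hwi₀
        · simp only [Finset.mem_filter, Finset.mem_univ, true_and]
          exact fun h => hj (hwsupp j (husupp j h))
      have hcardw : (Finset.univ.filter fun j => w j ≠ 0).card ≤ m := by
        have := Finset.card_le_card hsub
        rw [Finset.card_erase_of_mem hmemv] at this
        omega
      obtain ⟨c', hc'ker, hc'const, hc'j₀, hc'supp⟩ := ih w hcardw hw0 j₀ hj₀
      set u' : Fin n → K := fun j => u j - u j₀ * c' j with hu'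
      have hu'0 : ∀ i : Fin n, ∑ j, δ^[(i : ℕ)] (a j) * u' j = 0 := by
        intro i
        have h1 : ∑ j, δ^[(i : ℕ)] (a j) * u' j =
            (∑ j, δ^[(i : ℕ)] (a j) * u j) - u j₀ * ∑ j, δ^[(i : ℕ)] (a j) * c' j := by
          rw [Finset.mul_sum, ← Finset.sum_sub_distrib]
          exact Finset.sum_congr rfl fun j _ => by simp only [hu']; ring
        rw [h1, hu0 i, hc'ker i, mul_zero, sub_zero]
      have hc'i₀ : c' i₀ = 0 := hc'supp i₀ hwi₀
      have hu'i₀ : u' i₀ = 1 := by simp [hu', hc'i₀, hui₀]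
      have hu'j₀ : u' j₀ = 0 := by simp [hu', hc'j₀]
      have hu'supp : ∀ j, v j = 0 → u' j = 0 := fun j h => by
        simp [hu', husupp j h, hc'supp j (hwsupp j (husupp j h))]
      have hsub' : (Finset.univ.filter fun j => u' j ≠ 0) ⊆
          (Finset.univ.filter fun j => v j ≠ 0).erase j₀ := by
        intro j hj
        simp only [Finset.mem_filter, Finset.mem_univ, true_and] at hj
        refine Finset.mem_erase.mpr ⟨?_, ?_⟩
        · rintro rfl; exact hj hu'j₀
        · simp only [Finset.mem_filter, Finset.mem_univ, true_and]
          exact fun h => hj (hu'supp j h)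
      have hmemv' : j₀ ∈ Finset.univ.filter fun j => v j ≠ 0 := by simp [hvj₀]
      have hcard' : (Finset.univ.filter fun j => u' j ≠ 0).card ≤ m := by
        have := Finset.card_le_card hsub'
        rw [Finset.card_erase_of_mem hmemv'] at this
        omega
      obtain ⟨c, hcker, hcconst, hci₀, hcsupp⟩ :=
        ih u' hcard' hu'0 i₀ (by rw [hu'i₀]; exact one_ne_zero)
      exact ⟨c, hcker, hcconst, hci₀, fun j h => hcsupp j (hu'supp j h)⟩

end WronskianKernel

/-- The right kernel of a Wronskian matrix is defined over the constants: it is spanned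
by kernel vectors all of whose entries are constants. -/
theorem wronskian_kernel_defined_over_constants
    {K : Type*} [Field K] (δ : K → K)
    (hadd : ∀ x y, δ (x + y) = δ x + δ y)
    (hmul : ∀ x y, δ (x * y) = δ x * y + x * δ y)
    (n : ℕ) (a : Fin n → K) (v : Fin n → K)
    (hv : (Matrix.of fun i j : Fin n => δ^[(i : ℕ)] (a j)).mulVec v = 0) :
    v ∈ Submodule.span K
      {w : Fin n → K |
        (Matrix.of fun i j : Fin n => δ^[(i : ℕ)] (a j)).mulVec w = 0 ∧
          ∀ i, δ (w i) = 0} := by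
  classical
  have hconv : ∀ x : Fin n → K,
      (Matrix.of fun i j : Fin n => δ^[(i : ℕ)] (a j)).mulVec x = 0 ↔
        ∀ i : Fin n, ∑ j, δ^[(i : ℕ)] (a j) * x j = 0 := by
    intro x
    rw [funext_iff]
    exact forall_congr' fun i => by simp [Matrix.mulVec, dotProduct]
  have main : ∀ (m : ℕ) (x : Fin n → K),
      (Finset.univ.filter fun j => x j ≠ 0).card ≤ m →
      (∀ i : Fin n, ∑ j, δ^[(i : ℕ)] (a j) * x j = 0) →
      x ∈ Submodule.span K
        {w : Fin n → K |
          (Matrix.of fun i j : Fin n => δ^[(i : ℕ)] (a j)).mulVec w = 0 ∧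
            ∀ i, δ (w i) = 0} := by
    intro m
    induction m with
    | zero =>
      intro x hcard _
      have hx : x = 0 := by
        funext j
        simp only [Pi.zero_apply]
        by_contra h
        have hmem : j ∈ Finset.univ.filter fun j => x j ≠ 0 := by simp [h]
        have := Finset.card_pos.mpr ⟨j, hmem⟩
        omega
      rw [hx]; exact Submodule.zero_mem _
    | succ m ih =>
      intro x hcard hx
      by_cases hxz : x = 0
      · rw [hxz]; exact Submodule.zero_mem _
      · obtain ⟨i₀, hi₀⟩ := Function.ne_iff.mp hxz
        simp only [Pi.zero_apply] at hi₀
        obtain ⟨c, hcker, hcconst, hci₀, hcsupp⟩ :=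
          wk_exists_const δ hadd hmul n a (m + 1) x hcard hx i₀ hi₀
        have hcS : c ∈ {w : Fin n → K |
            (Matrix.of fun i j : Fin n => δ^[(i : ℕ)] (a j)).mulVec w = 0 ∧
              ∀ i, δ (w i) = 0} := ⟨(hconv c).mpr hcker, hcconst⟩
        set x' : Fin n → K := fun j => x j - x i₀ * c j with hx'
        have hx'0 : ∀ i : Fin n, ∑ j, δ^[(i : ℕ)] (a j) * x' j = 0 := by
          intro i
          have h1 : ∑ j, δ^[(i : ℕ)] (a j) * x' j =
              (∑ j, δ^[(i : ℕ)] (a j) * x j) - x i₀ * ∑ j, δ^[(i : ℕ)] (a j) * c j := by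
            rw [Finset.mul_sum, ← Finset.sum_sub_distrib]
            exact Finset.sum_congr rfl fun j _ => by simp only [hx']; ring
          rw [h1, hx i, hcker i, mul_zero, sub_zero]
        have hx'i₀ : x' i₀ = 0 := by simp [hx', hci₀]
        have hx'supp : ∀ j, x j = 0 → x' j = 0 := fun j h => by
          simp [hx', h, hcsupp j h]
        have hmemx : i₀ ∈ Finset.univ.filter fun j => x j ≠ 0 := by simp [hi₀]
        have hsub : (Finset.univ.filter fun j => x' j ≠ 0) ⊆
            (Finset.univ.filter fun j => x j ≠ 0).erase i₀ := by
          intro j hj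
          simp only [Finset.mem_filter, Finset.mem_univ, true_and] at hj
          refine Finset.mem_erase.mpr ⟨?_, ?_⟩
          · rintro rfl; exact hj hx'i₀
          · simp only [Finset.mem_filter, Finset.mem_univ, true_and]
            exact fun h => hj (hx'supp j h)
        have hcard' : (Finset.univ.filter fun j => x' j ≠ 0).card ≤ m := by
          have := Finset.card_le_card hsub
          rw [Finset.card_erase_of_mem hmemx] at this
          omega
        have hx'mem := ih x' hcard' hx'0
        have hxeq : x = x' + x i₀ • c := by
          funext j; simp only [hx', Pi.add_apply, Pi.smul_apply, smul_eq_mul]; ring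
        rw [hxeq]
        exact Submodule.add_mem _ hx'mem
          (Submodule.smul_mem _ _ (Submodule.subset_span hcS))
  exact main _ v le_rfl ((hconv v).mp hv)
end

section
/- Let x, a, b be indeterminates over ℂ. Then ℂ(a, b) ∩ ℂ(ax + b, x) = ℂ, where the intersection is taken inside the rational function field ℂ(a, b, x). -/
open MvPolynomial

/-- The rational function field ℂ(a,b,x) in three independent variables. -/
noncomputable abbrev K6 : Type := FractionRing (MvPolynomial (Fin 3) ℂ)

noncomputable def a6 : K6 := algebraMap (MvPolynomial (Fin 3) ℂ) K6 (X 0)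
noncomputable def b6 : K6 := algebraMap (MvPolynomial (Fin 3) ℂ) K6 (X 1)
noncomputable def x6 : K6 := algebraMap (MvPolynomial (Fin 3) ℂ) K6 (X 2)

/-- The constants ℂ inside ℂ(a,b,x). -/
noncomputable def C6 : Set K6 :=
  Set.range fun c : ℂ => algebraMap (MvPolynomial (Fin 3) ℂ) K6 (MvPolynomial.C c)

/- ----------------- Auxiliary material ----------------- -/

set_option synthInstance.maxHeartbeats 1000000
set_option maxHeartbeats 2000000

namespace Aux

variable {σ : Type*} [DecidableEq σ]

theorem coeff_pderiv (i : σ) (p : MvPolynomial σ ℂ) (m : σ →₀ ℕ) :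
    coeff m (pderiv i p) = ((m i : ℂ) + 1) * coeff (m + Finsupp.single i 1) p := by
  induction p using MvPolynomial.induction_on' with
  | add p q hp hq => simp [hp, hq, mul_add]
  | monomial s a =>
    rw [pderiv_monomial]
    rcases eq_or_ne s (m + Finsupp.single i 1) with rfl | hs
    · rw [coeff_monomial, if_pos (by simp [add_tsub_cancel_right]), coeff_monomial, if_pos rfl]
      simp [mul_comm]
    · rw [coeff_monomial, coeff_monomial, if_neg hs, mul_zero]
      split_ifs with h
      · rcases Nat.eq_zero_or_pos (s i) with h0 | h0
        · simp [h0]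
        · exfalso
          apply hs
          ext j
          have hj2 := DFunLike.congr_fun h j
          rw [Finsupp.tsub_apply] at hj2
          rcases eq_or_ne j i with rfl | hj
          · simp only [Finsupp.single_eq_same] at hj2 ⊢
            simp only [Finsupp.add_apply, Finsupp.single_eq_same]
            omega
          · simp only [Finsupp.single_eq_of_ne hj] at hj2
            simp [Finsupp.single_eq_of_ne hj]
            omega
      · rfl

theorem eq_C_of_pderiv_eq_zero {p : MvPolynomial σ ℂ} (h : ∀ i, pderiv i p = 0) :
    p = C (coeff 0 p) := by
  ext s
  rcases eq_or_ne s 0 with rfl | hs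
  · simp
  · obtain ⟨i, hi⟩ : ∃ i, s i ≠ 0 := by
      by_contra h'
      push_neg at h'
      exact hs (Finsupp.ext fun i => h' i)
    have h2 := congrArg (coeff (s - Finsupp.single i 1)) (h i)
    rw [coeff_pderiv, coeff_zero] at h2
    have hle : Finsupp.single i 1 ≤ s := by
      rw [Finsupp.single_le_iff]
      omega
    rw [tsub_add_cancel_of_le hle, Finsupp.tsub_apply, Finsupp.single_eq_same] at h2
    have hcast : ((s i - 1 : ℕ) : ℂ) + 1 = ((s i : ℕ) : ℂ) := by
      have h4 : s i - 1 + 1 = s i := by omega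
      exact_mod_cast congrArg (fun n : ℕ => (n : ℂ)) h4
    rw [hcast] at h2
    have hcoeff : coeff s p = 0 := by
      rcases mul_eq_zero.mp h2 with h3 | h3
      · exact absurd (Nat.cast_eq_zero.mp h3) hi
      · exact h3
    rw [hcoeff, coeff_C, if_neg (fun hh => hs hh.symm)]

theorem totalDegree_pderiv_lt (i : σ) {p : MvPolynomial σ ℂ} (h : pderiv i p ≠ 0) :
    totalDegree (pderiv i p) < totalDegree p := by
  obtain ⟨s, hs, hsum⟩ := Finset.exists_mem_eq_sup (pderiv i p).support
    (MvPolynomial.support_nonempty.mpr h) (fun s => s.sum fun _ e => e)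
  have hcs : coeff s (pderiv i p) ≠ 0 := mem_support_iff.mp hs
  rw [coeff_pderiv] at hcs
  have hcoeff : coeff (s + Finsupp.single i 1) p ≠ 0 := right_ne_zero_of_mul hcs
  have hle := le_totalDegree (mem_support_iff.mpr hcoeff)
  have hsum2 : ((s + Finsupp.single i 1).sum fun _ e => e) = (s.sum fun _ e => e) + 1 := by
    rw [Finsupp.sum_add_index' (fun _ => rfl) (fun _ _ _ => rfl)]
    simp
  rw [totalDegree, hsum]
  omega

theorem pderiv_comm (i j : σ) (p : MvPolynomial σ ℂ) :
    pderiv i (pderiv j p) = pderiv j (pderiv i p) := by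
  induction p using MvPolynomial.induction_on' with
  | add p q hp hq => simp [hp, hq]
  | monomial s a =>
    simp only [pderiv_monomial]
    rcases eq_or_ne i j with rfl | hij
    · rfl
    · congr 1
      · rw [tsub_tsub, tsub_tsub, add_comm]
      · rw [Finsupp.tsub_apply, Finsupp.tsub_apply,
          Finsupp.single_eq_of_ne hij, Finsupp.single_eq_of_ne (Ne.symm hij),
          Nat.sub_zero, Nat.sub_zero]
        ring

omit [DecidableEq σ] in
theorem hc_top_ne_zero {p : MvPolynomial σ ℂ} (hp : p ≠ 0) :
    homogeneousComponent p.totalDegree p ≠ 0 := by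
  obtain ⟨s, hs, hsum⟩ := Finset.exists_mem_eq_sup p.support
    (MvPolynomial.support_nonempty.mpr hp) (fun s => s.sum fun _ e => e)
  intro h0
  have h1 := congrArg (coeff s) h0
  rw [coeff_homogeneousComponent, coeff_zero] at h1
  have hdeg : Finsupp.degree s = p.totalDegree := by
    rw [totalDegree, hsum]
    rfl
  rw [if_pos hdeg] at h1
  exact mem_support_iff.mp hs h1

omit [DecidableEq σ] in
theorem sub_hc_top (p : MvPolynomial σ ℂ) :
    p - homogeneousComponent p.totalDegree p = 0 ∨
      totalDegree (p - homogeneousComponent p.totalDegree p) < p.totalDegree := by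
  set a := p.totalDegree with ha
  set r := p - homogeneousComponent a p with hr
  have hsupp : ∀ s ∈ r.support, (s.sum fun _ e => e) < a := by
    intro s hs
    have hcr : coeff s r ≠ 0 := mem_support_iff.mp hs
    rw [hr, coeff_sub, coeff_homogeneousComponent] at hcr
    rcases lt_or_ge (s.sum fun _ e => e) a with h | h
    · exact h
    rcases lt_or_eq_of_le h with h | h
    · exfalso
      have : coeff s p = 0 := coeff_eq_zero_of_totalDegree_lt (by rw [← ha]; exact h)
      rw [this, if_neg, sub_zero] at hcr
      · exact hcr rfl
      · show ¬ Finsupp.degree s = a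
        have hde : Finsupp.degree s = s.sum fun _ e => e := rfl
        omega
    · exfalso
      have hde : Finsupp.degree s = a := by
        have : Finsupp.degree s = s.sum fun _ e => e := rfl
        omega
      rw [if_pos hde, sub_self] at hcr
      exact hcr rfl
  rcases eq_or_ne r 0 with h | h
  · exact Or.inl h
  · right
    rw [totalDegree]
    apply Finset.sup_lt_iff ?_ |>.mpr hsupp
    rcases Nat.eq_zero_or_pos a with h0 | h0
    · exfalso
      obtain ⟨s, hs⟩ := MvPolynomial.support_nonempty.mpr h
      have := hsupp s hs
      omega
    · exact h0

omit [DecidableEq σ] in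
theorem le_totalDegree_mul {p q : MvPolynomial σ ℂ} (hpq : p * q ≠ 0) :
    totalDegree p ≤ totalDegree (p * q) := by
  have hp : p ≠ 0 := left_ne_zero_of_mul hpq
  have hq : q ≠ 0 := right_ne_zero_of_mul hpq
  set a := totalDegree p with ha
  set b := totalDegree q with hb
  set A := homogeneousComponent a p with hA'
  set B := homogeneousComponent b q with hB'
  have hA : A ≠ 0 := hc_top_ne_zero hp
  have hB : B ≠ 0 := hc_top_ne_zero hq
  have hAhom : A.IsHomogeneous a := homogeneousComponent_isHomogeneous a p
  have hBhom : B.IsHomogeneous b := homogeneousComponent_isHomogeneous b q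
  have hABhom : (A * B).IsHomogeneous (a + b) := hAhom.mul hBhom
  have hAB : A * B ≠ 0 := mul_ne_zero hA hB
  have htdA : totalDegree A = a := hAhom.totalDegree hA
  have htdB : totalDegree B = b := hBhom.totalDegree hB
  have hsmall : ∀ t : MvPolynomial σ ℂ, t = 0 ∨ totalDegree t < a + b →
      homogeneousComponent (a + b) t = 0 := by
    rintro t (rfl | h)
    · exact map_zero _
    · exact homogeneousComponent_eq_zero _ _ h
  have key : homogeneousComponent (a + b) (p * q) = A * B := by
    have expand : p * q = A * B + (A * (q - B) + ((p - A) * B + (p - A) * (q - B))) := by ring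
    rw [expand, map_add, map_add, map_add]
    have e1 : homogeneousComponent (a + b) (A * B) = A * B := by
      rw [homogeneousComponent_of_mem ((mem_homogeneousSubmodule _ _).mpr hABhom), if_pos rfl]
    have e2 : homogeneousComponent (a + b) (A * (q - B)) = 0 := by
      apply hsmall
      rcases eq_or_ne (A * (q - B)) 0 with h | h
      · exact Or.inl h
      right
      have h2 : q - B ≠ 0 := right_ne_zero_of_mul h
      have h3 : totalDegree (q - B) < b := (sub_hc_top q).resolve_left h2
      calc totalDegree (A * (q - B)) ≤ totalDegree A + totalDegree (q - B) := totalDegree_mul _ _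
        _ < a + b := by omega
    have e3 : homogeneousComponent (a + b) ((p - A) * B) = 0 := by
      apply hsmall
      rcases eq_or_ne ((p - A) * B) 0 with h | h
      · exact Or.inl h
      right
      have h2 : p - A ≠ 0 := left_ne_zero_of_mul h
      have h3 : totalDegree (p - A) < a := (sub_hc_top p).resolve_left h2
      calc totalDegree ((p - A) * B) ≤ totalDegree (p - A) + totalDegree B := totalDegree_mul _ _
        _ < a + b := by omega
    have e4 : homogeneousComponent (a + b) ((p - A) * (q - B)) = 0 := by
      apply hsmall
      rcases eq_or_ne ((p - A) * (q - B)) 0 with h | h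
      · exact Or.inl h
      right
      have h2 : p - A ≠ 0 := left_ne_zero_of_mul h
      have h2' : q - B ≠ 0 := right_ne_zero_of_mul h
      have h3 : totalDegree (p - A) < a := (sub_hc_top p).resolve_left h2
      have h3' : totalDegree (q - B) < b := (sub_hc_top q).resolve_left h2'
      calc totalDegree ((p - A) * (q - B)) ≤ totalDegree (p - A) + totalDegree (q - B) :=
            totalDegree_mul _ _
        _ < a + b := by omega
    rw [e1, e2, e3, e4]
    ring
  have : a + b ≤ totalDegree (p * q) := by
    by_contra hlt
    push_neg at hlt
    exact hAB (key ▸ homogeneousComponent_eq_zero _ _ hlt)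
  omega

omit [DecidableEq σ] in
theorem totalDegree_le_of_dvd {p q : MvPolynomial σ ℂ} (h : p ∣ q) (hq : q ≠ 0) :
    totalDegree p ≤ totalDegree q := by
  obtain ⟨c, rfl⟩ := h
  exact le_totalDegree_mul hq

end Aux

noncomputable abbrev Rc : Type := MvPolynomial (Fin 3) ℂ

/-- Kernel of a derivation, as a subfield of the fraction field. -/
noncomputable def kerS (d : Derivation ℂ Rc Rc) : Subfield K6 where
  carrier := {z | ∃ p q : Rc, q ≠ 0 ∧ z * algebraMap Rc K6 q = algebraMap Rc K6 p ∧
    d p * q = p * d q}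
  one_mem' := ⟨1, 1, one_ne_zero, by simp, by simp⟩
  zero_mem' := ⟨0, 1, one_ne_zero, by simp, by simp⟩
  add_mem' := by
    rintro z w ⟨p, q, hq, hz, hd⟩ ⟨r, s, hs, hw, he⟩
    refine ⟨p * s + q * r, q * s, mul_ne_zero hq hs, ?_, ?_⟩
    · rw [map_mul, map_add, map_mul, map_mul]
      linear_combination (algebraMap Rc K6 s) * hz + (algebraMap Rc K6 q) * hw
    · simp only [map_add, Derivation.leibniz, smul_eq_mul]
      linear_combination (s ^ 2) * hd + (q ^ 2) * he
  mul_mem' := by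
    rintro z w ⟨p, q, hq, hz, hd⟩ ⟨r, s, hs, hw, he⟩
    refine ⟨p * r, q * s, mul_ne_zero hq hs, ?_, ?_⟩
    · rw [map_mul, map_mul]
      linear_combination (w * algebraMap Rc K6 s) * hz + (algebraMap Rc K6 p) * hw
    · simp only [Derivation.leibniz, smul_eq_mul]
      linear_combination (r * s) * hd + (p * q) * he
  neg_mem' := by
    rintro z ⟨p, q, hq, hz, hd⟩
    refine ⟨-p, q, hq, ?_, ?_⟩
    · rw [map_neg]; linear_combination -hz
    · rw [map_neg]; linear_combination -hd
  inv_mem' := by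
    rintro z ⟨p, q, hq, hz, hd⟩
    rcases eq_or_ne z 0 with rfl | hz0
    · exact ⟨0, 1, one_ne_zero, by simp, by simp⟩
    · have hp : p ≠ 0 := by
        intro h
        rw [h, map_zero] at hz
        exact hz0 (by
          have := mul_eq_zero.mp hz
          have hq' : algebraMap Rc K6 q ≠ 0 := by
            rw [map_ne_zero_iff _ (IsFractionRing.injective Rc K6)]
            exact hq
          tauto)
      refine ⟨q, p, hp, ?_, ?_⟩
      · rw [← hz]
        field_simp
      · linear_combination -hd

theorem kerS_rel {d : Derivation ℂ Rc Rc} {z : K6} (hz : z ∈ kerS d)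
    {p q : Rc} (hq : q ≠ 0) (h : z * algebraMap Rc K6 q = algebraMap Rc K6 p) :
    d p * q = p * d q := by
  obtain ⟨n, m, hm, hzm, hdm⟩ := hz
  have hinj := IsFractionRing.injective Rc K6
  have hE1 : n * q = p * m := by
    apply hinj
    rw [map_mul, map_mul]
    have h5 : (z * algebraMap Rc K6 m) * algebraMap Rc K6 q
        = (z * algebraMap Rc K6 q) * algebraMap Rc K6 m := by ring
    rw [hzm, h] at h5
    linear_combination h5
  have hE3 : d n * q + n * d q = d p * m + p * d m := by
    have h' := congrArg d hE1
    simp only [Derivation.leibniz, smul_eq_mul] at h'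
    linear_combination h'
  rcases eq_or_ne p 0 with rfl | hp
  · simp
  · have hmq : (m ^ 2 : Rc) ≠ 0 := pow_ne_zero _ hm
    have key : d p * q * m ^ 2 = p * d q * m ^ 2 := by
      linear_combination (-(m * q)) * hE3 + (d q * m + d m * q) * hE1 + (q ^ 2) * hdm
    exact mul_right_cancel₀ hmq key

/-- ℂ(a, b) ∩ ℂ(ax + b, x) = ℂ inside ℂ(a, b, x). -/
theorem intersection_eq_constants :
    Subfield.closure (C6 ∪ {a6, b6}) ⊓ Subfield.closure (C6 ∪ {a6 * x6 + b6, x6}) =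
      Subfield.closure C6 := by
  classical
  apply le_antisymm
  · intro f hf
    have hf1 : f ∈ Subfield.closure (C6 ∪ {a6, b6}) := hf.1
    have hf2 : f ∈ Subfield.closure (C6 ∪ {a6 * x6 + b6, x6}) := hf.2
    set dX : Derivation ℂ Rc Rc := pderiv 2 with hdX
    set dW : Derivation ℂ Rc Rc := (pderiv (0 : Fin 3) : Derivation ℂ Rc Rc) - ((X (2 : Fin 3) : Rc) • (pderiv (1 : Fin 3) : Derivation ℂ Rc Rc) : Derivation ℂ Rc Rc) with hdW
    have hdWapp : ∀ p : Rc, dW p = pderiv 0 p - X 2 * pderiv 1 p := by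
      intro p
      rw [hdW]
      simp
    have hgen1 : (C6 ∪ {a6, b6}) ⊆ (kerS dX : Set K6) := by
      rintro z (⟨c, rfl⟩ | rfl | rfl)
      · exact ⟨MvPolynomial.C c, 1, one_ne_zero, by simp, by simp [hdX, pderiv_C]⟩
      · refine ⟨X 0, 1, one_ne_zero, by simp [a6], ?_⟩
        rw [hdX]
        simp [pderiv_X_of_ne (show (0 : Fin 3) ≠ 2 by decide)]
      · refine ⟨X 1, 1, one_ne_zero, by simp [b6], ?_⟩
        rw [hdX]
        simp [pderiv_X_of_ne (show (1 : Fin 3) ≠ 2 by decide)]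
    have hgen2 : (C6 ∪ {a6 * x6 + b6, x6}) ⊆ (kerS dW : Set K6) := by
      rintro z (⟨c, rfl⟩ | rfl | rfl)
      · refine ⟨MvPolynomial.C c, 1, one_ne_zero, by simp, ?_⟩
        rw [hdWapp, hdWapp]
        simp [pderiv_C]
      · refine ⟨X 0 * X 2 + X 1, 1, one_ne_zero, ?_, ?_⟩
        · simp [a6, b6, x6, map_add, map_mul]
        · rw [hdWapp, hdWapp]
          simp [pderiv_mul, pderiv_X_self,
            pderiv_X_of_ne (show (0 : Fin 3) ≠ 1 by decide),
            pderiv_X_of_ne (show (2 : Fin 3) ≠ 1 by decide),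
            pderiv_X_of_ne (show (2 : Fin 3) ≠ 0 by decide),
            pderiv_X_of_ne (show (1 : Fin 3) ≠ 0 by decide)]
      · refine ⟨X 2, 1, one_ne_zero, by simp [x6], ?_⟩
        rw [hdWapp, hdWapp]
        simp [pderiv_X_of_ne (show (2 : Fin 3) ≠ 0 by decide),
          pderiv_X_of_ne (show (2 : Fin 3) ≠ 1 by decide)]
    have hf1' : f ∈ kerS dX := Subfield.closure_le.mpr hgen1 hf1
    have hf2' : f ∈ kerS dW := Subfield.closure_le.mpr hgen2 hf2
    obtain ⟨n, m', hcop', hmk⟩ := IsFractionRing.exists_reduced_fraction Rc f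
    set m : Rc := (m' : Rc) with hmm
    have hcop : IsRelPrime n m := hcop'
    have hm0 : m ≠ 0 := nonZeroDivisors.coe_ne_zero m'
    have hrep : f * algebraMap Rc K6 m = algebraMap Rc K6 n := by
      rw [← hmk]
      exact IsLocalization.mk'_spec _ _ _
    have rel1 : pderiv 2 n * m = n * pderiv 2 m := by
      have := kerS_rel hf1' hm0 hrep
      rwa [hdX] at this
    have rel2 : (pderiv 0 n - X 2 * pderiv 1 n) * m = n * (pderiv 0 m - X 2 * pderiv 1 m) := by
      have := kerS_rel hf2' hm0 hrep
      rwa [hdWapp, hdWapp] at this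
    have h2 : pderiv 0 n * m - n * pderiv 0 m
        = X 2 * (pderiv 1 n * m - n * pderiv 1 m) := by
      linear_combination rel2
    have r1a : pderiv 0 (pderiv 2 n) * m + pderiv 2 n * pderiv 0 m
        = pderiv 0 n * pderiv 2 m + n * pderiv 0 (pderiv 2 m) := by
      have h' := congrArg (pderiv 0) rel1
      simp only [Derivation.leibniz, smul_eq_mul] at h'
      linear_combination h'
    have r1b : pderiv 1 (pderiv 2 n) * m + pderiv 2 n * pderiv 1 m
        = pderiv 1 n * pderiv 2 m + n * pderiv 1 (pderiv 2 m) := by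
      have h' := congrArg (pderiv 1) rel1
      simp only [Derivation.leibniz, smul_eq_mul] at h'
      linear_combination h'
    have sa : pderiv 2 (pderiv 0 n * m - n * pderiv 0 m) * m
        = 2 * (pderiv 0 n * m - n * pderiv 0 m) * pderiv 2 m := by
      simp only [map_sub, Derivation.leibniz, smul_eq_mul]
      rw [Aux.pderiv_comm 2 0 n, Aux.pderiv_comm 2 0 m]
      linear_combination m * r1a - 2 * (pderiv 0 m) * rel1
    have sb : pderiv 2 (pderiv 1 n * m - n * pderiv 1 m) * m
        = 2 * (pderiv 1 n * m - n * pderiv 1 m) * pderiv 2 m := by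
      simp only [map_sub, Derivation.leibniz, smul_eq_mul]
      rw [Aux.pderiv_comm 2 1 n, Aux.pderiv_comm 2 1 m]
      linear_combination m * r1b - 2 * (pderiv 1 m) * rel1
    have h2x : pderiv 2 (pderiv 0 n * m - n * pderiv 0 m)
        = (pderiv 1 n * m - n * pderiv 1 m)
          + X 2 * pderiv 2 (pderiv 1 n * m - n * pderiv 1 m) := by
      have h' := congrArg (pderiv 2) h2
      rw [pderiv_mul, pderiv_X_self] at h'
      linear_combination h'
    have hgb : (pderiv 1 n * m - n * pderiv 1 m) * m = 0 := by
      linear_combination (-(m : Rc)) * h2x + sa + (-(X 2 : Rc)) * sb + (2 * pderiv 2 m) * h2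
    have hgb0 : pderiv 1 n * m - n * pderiv 1 m = 0 :=
      (mul_eq_zero.mp hgb).resolve_right hm0
    have hga0 : pderiv 0 n * m - n * pderiv 0 m = 0 := by
      rw [h2, hgb0, mul_zero]
    have hrel : ∀ i : Fin 3, pderiv i n * m = n * pderiv i m := by
      intro i
      fin_cases i
      · show pderiv (0 : Fin 3) n * m = n * pderiv (0 : Fin 3) m
        linear_combination hga0
      · show pderiv (1 : Fin 3) n * m = n * pderiv (1 : Fin 3) m
        linear_combination hgb0
      · exact rel1
    have hdm : ∀ i : Fin 3, pderiv i m = 0 := by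
      intro i
      by_contra hne
      have hdvd : m ∣ pderiv i m := by
        apply hcop.symm.dvd_of_dvd_mul_left
        exact ⟨pderiv i n, by linear_combination -(hrel i)⟩
      have hd1 := Aux.totalDegree_le_of_dvd hdvd hne
      have hd2 := Aux.totalDegree_pderiv_lt i hne
      omega
    have hdn : ∀ i : Fin 3, pderiv i n = 0 := by
      intro i
      have h' := hrel i
      rw [hdm i, mul_zero] at h'
      exact (mul_eq_zero.mp h').resolve_right hm0
    have hm_eq : m = MvPolynomial.C (coeff 0 m) := Aux.eq_C_of_pderiv_eq_zero hdm
    have hn_eq : n = MvPolynomial.C (coeff 0 n) := Aux.eq_C_of_pderiv_eq_zero hdn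
    set cm := coeff 0 m with hcm'
    set cn := coeff 0 n with hcn'
    have hcm : cm ≠ 0 := by
      intro h'
      apply hm0
      rw [hm_eq, h', map_zero]
    have hφm : algebraMap Rc K6 m ≠ 0 := by
      rw [map_ne_zero_iff _ (IsFractionRing.injective Rc K6)]
      exact hm0
    have hfc : f = algebraMap Rc K6 (MvPolynomial.C (cn / cm)) := by
      apply mul_right_cancel₀ hφm
      rw [hrep, hn_eq, hm_eq, ← map_mul, ← C_mul, div_mul_cancel₀ _ hcm]
    exact Subfield.subset_closure ⟨cn / cm, hfc.symm⟩
  · exact le_inf (Subfield.closure_mono Set.subset_union_left)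
      (Subfield.closure_mono Set.subset_union_left)
end

section
/- The map α on ℂ(k₁, k₂, ε_A, ε_B) determined by α(k₁) = k₂, α(k₂) = k₁, α(ε_A) = ε_A, α(ε_B) = ε_A + k₁(ε_B − ε_A)/k₂ is a field automorphism of ℂ(k₁, k₂, ε_A, ε_B) over ℂ, it is an involution, and it fixes ℂ(k₁ + k₂, k₁k₂, ε_A, ε_A k₂ + ε_B k₁) pointwise. -/
set_option synthInstance.maxHeartbeats 1000000
set_option maxHeartbeats 2000000


open MvPolynomial

noncomputable abbrev K8 : Type := FractionRing (MvPolynomial (Fin 4) ℂ)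

noncomputable def k₁ : K8 := algebraMap (MvPolynomial (Fin 4) ℂ) K8 (X 0)
noncomputable def k₂ : K8 := algebraMap (MvPolynomial (Fin 4) ℂ) K8 (X 1)
noncomputable def εA : K8 := algebraMap (MvPolynomial (Fin 4) ℂ) K8 (X 2)
noncomputable def εB : K8 := algebraMap (MvPolynomial (Fin 4) ℂ) K8 (X 3)

namespace SlowFastAux

abbrev R : Type := MvPolynomial (Fin 4) ℂ

noncomputable def f : R := X 0 * X 1

lemma f_ne : f ≠ 0 := mul_ne_zero (X_ne_zero _) (X_ne_zero _)

abbrev R' : Type := Localization.Away f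

lemma powers_le : Submonoid.powers f ≤ nonZeroDivisors R :=
  Submonoid.powers_le.2 (mem_nonZeroDivisors_of_ne_zero f_ne)

noncomputable instance : Algebra R' K8 :=
  IsLocalization.localizationAlgebraOfSubmonoidLe R' K8 _ _ powers_le

instance : IsScalarTower R R' K8 :=
  IsLocalization.localization_isScalarTower_of_submonoid_le R' K8 _ _ powers_le

instance : IsFractionRing R' K8 :=
  IsFractionRing.isFractionRing_of_isDomain_of_isLocalization (Submonoid.powers f) R' K8

instance : IsScalarTower ℂ R' K8 :=
  IsScalarTower.of_algebraMap_eq (R := ℂ) (S := R') (A := K8) fun c => by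
    rw [IsScalarTower.algebraMap_apply ℂ R R', ← IsScalarTower.algebraMap_apply R R' K8,
      ← IsScalarTower.algebraMap_apply ℂ R K8]

noncomputable def iv : R' := IsLocalization.Away.invSelf f

lemma hiv : algebraMap R R' f * iv = 1 := IsLocalization.Away.mul_invSelf f

lemma hiv' : algebraMap R R' (X 0) * algebraMap R R' (X 1) * iv = 1 := by
  have h := hiv; unfold f at h; rwa [map_mul] at h

noncomputable def v : Fin 4 → R' :=
  ![algebraMap R R' (X 1), algebraMap R R' (X 0), algebraMap R R' (X 2),
    algebraMap R R' (X 2) +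
      algebraMap R R' (X 0) * (algebraMap R R' (X 3) - algebraMap R R' (X 2)) *
        (algebraMap R R' (X 0) * iv)]

noncomputable def φ : R →ₐ[ℂ] R' := aeval v

lemma φ_f : φ f = algebraMap R R' f := by
  simp [φ, f, v, mul_comm]

lemma φ_unit : IsUnit (φ.toRingHom f) := by
  rw [AlgHom.toRingHom_eq_coe, RingHom.coe_coe, φ_f]
  exact IsUnit.of_mul_eq_one _ hiv

noncomputable def Φ : R' →+* R' := IsLocalization.Away.lift f φ_unit

lemma Φ_alg (p : R) : Φ (algebraMap R R' p) = φ p :=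
  IsLocalization.Away.lift_eq f φ_unit p

lemma Φ_iv : Φ iv = iv := by
  have h : algebraMap R R' f * Φ iv = 1 := by
    rw [← φ_f, ← Φ_alg, ← map_mul, hiv, map_one]
  have h2 : iv = Φ iv := by
    calc iv = iv * (algebraMap R R' f * Φ iv) := by rw [h, mul_one]
      _ = (algebraMap R R' f * iv) * Φ iv := by ring
      _ = Φ iv := by rw [hiv, one_mul]
  exact h2.symm

lemma h0 : φ (X 0) = algebraMap R R' (X 1) := by
  show (aeval v) (X 0) = _; rw [aeval_X]; rfl
lemma h1 : φ (X 1) = algebraMap R R' (X 0) := by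
  show (aeval v) (X 1) = _; rw [aeval_X]; rfl
lemma h2 : φ (X 2) = algebraMap R R' (X 2) := by
  show (aeval v) (X 2) = _; rw [aeval_X]; rfl
lemma h3 : φ (X 3) = algebraMap R R' (X 2) +
    algebraMap R R' (X 0) * (algebraMap R R' (X 3) - algebraMap R R' (X 2)) *
      (algebraMap R R' (X 0) * iv) := by
  show (aeval v) (X 3) = _; rw [aeval_X]; rfl

lemma ΦΦ_comp : (Φ.comp Φ).comp (algebraMap R R') = algebraMap R R' := by
  apply MvPolynomial.ringHom_ext
  · intro a
    have hC : (algebraMap R R') (C a) = algebraMap ℂ R' a := by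
      rw [IsScalarTower.algebraMap_apply ℂ R R']; rfl
    have hφC : φ (C a) = algebraMap ℂ R' a := by
      show (aeval v) (C a) = _; rw [aeval_C]
    simp only [RingHom.comp_apply, Φ_alg]
    rw [hφC, ← hC, Φ_alg, hφC, hC]
  · intro i
    simp only [RingHom.comp_apply, Φ_alg]
    fin_cases i
    · show Φ (φ (X 0)) = algebraMap R R' (X 0)
      rw [h0, Φ_alg, h1]
    · show Φ (φ (X 1)) = algebraMap R R' (X 1)
      rw [h1, Φ_alg, h0]
    · show Φ (φ (X 2)) = algebraMap R R' (X 2)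
      rw [h2, Φ_alg, h2]
    · show Φ (φ (X 3)) = algebraMap R R' (X 3)
      rw [h3, map_add, map_mul, map_mul, map_mul, map_sub, Φ_iv]
      simp only [Φ_alg]
      simp only [h0, h1, h2, h3]
      have key := hiv'
      set a := algebraMap R R' (X 0)
      set b := algebraMap R R' (X 1)
      set c := algebraMap R R' (X 2)
      set d := algebraMap R R' (X 3)
      linear_combination ((d - c) * (a * b * iv + 1)) * key

lemma ΦΦ_id : ∀ x : R', Φ (Φ x) = x := by
  have h : Φ.comp Φ = RingHom.id R' := by
    apply IsLocalization.ringHom_ext (Submonoid.powers f)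
    rw [RingHom.id_comp]
    exact ΦΦ_comp
  intro x
  have := RingHom.congr_fun h x
  simpa using this

noncomputable def e : R' ≃ₐ[ℂ] R' :=
  { toFun := Φ
    invFun := Φ
    left_inv := ΦΦ_id
    right_inv := ΦΦ_id
    map_mul' := map_mul Φ
    map_add' := map_add Φ
    commutes' := fun c => by
      have hC : (algebraMap ℂ R') c = algebraMap R R' (C c) := by
        rw [IsScalarTower.algebraMap_apply ℂ R R']; rfl
      rw [hC]
      show Φ (algebraMap R R' (C c)) = algebraMap R R' (C c)
      rw [Φ_alg]
      simp [φ, hC] }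

noncomputable def α : K8 ≃ₐ[ℂ] K8 :=
  IsLocalization.algEquivOfAlgEquiv (M := nonZeroDivisors R') (T := nonZeroDivisors R') K8 K8 e
    (MulEquivClass.map_nonZeroDivisors e)

lemma α_alg (x : R') : α (algebraMap R' K8 x) = algebraMap R' K8 (Φ x) :=
  IsLocalization.algEquivOfAlgEquiv_eq _ x

lemma α_poly (p : R) : α (algebraMap R K8 p) = algebraMap R' K8 (φ p) := by
  rw [IsScalarTower.algebraMap_apply R R' K8, α_alg, Φ_alg]

lemma hk2 : k₂ ≠ 0 := by
  unfold k₂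
  exact (map_ne_zero_iff _ (IsFractionRing.injective R K8)).2 (X_ne_zero 1)

lemma hiv2 : k₁ * k₂ * algebraMap R' K8 iv = 1 := by
  have h := congrArg (algebraMap R' K8) hiv'
  rw [map_mul, map_mul, map_one, ← IsScalarTower.algebraMap_apply R R' K8,
    ← IsScalarTower.algebraMap_apply R R' K8] at h
  exact h

lemma αk₁ : α k₁ = k₂ := by
  unfold k₁ k₂
  rw [α_poly, h0, ← IsScalarTower.algebraMap_apply R R' K8]

lemma αk₂ : α k₂ = k₁ := by
  unfold k₁ k₂
  rw [α_poly, h1, ← IsScalarTower.algebraMap_apply R R' K8]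

lemma αεA : α εA = εA := by
  unfold εA
  rw [α_poly, h2, ← IsScalarTower.algebraMap_apply R R' K8]

lemma αεB : α εB = εA + k₁ * (εB - εA) / k₂ := by
  unfold εB
  rw [α_poly, h3, map_add, map_mul, map_mul, map_mul, map_sub,
    ← IsScalarTower.algebraMap_apply R R' K8, ← IsScalarTower.algebraMap_apply R R' K8,
    ← IsScalarTower.algebraMap_apply R R' K8]
  show εA + k₁ * (εB - εA) * (k₁ * algebraMap R' K8 iv) = εA + k₁ * (εB - εA) / k₂
  have hx : k₁ * algebraMap R' K8 iv = 1 / k₂ := by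
    rw [eq_div_iff hk2]; linear_combination hiv2
  rw [hx, mul_one_div]

lemma αα (x : K8) : α (α x) = x := by
  have h : (α : K8 →+* K8).comp (α : K8 →+* K8) = RingHom.id K8 := by
    apply IsLocalization.ringHom_ext (nonZeroDivisors R')
    ext r
    show α (α (algebraMap R' K8 r)) = algebraMap R' K8 r
    rw [α_alg, α_alg, ΦΦ_id]
  have h2 := RingHom.congr_fun h x
  simpa using h2

end SlowFastAux

open SlowFastAux in
/-- The slow–fast ambiguity transformation is a field automorphism of
ℂ(k₁,k₂,ε_A,ε_B) over ℂ, is an involution, and fixes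
ℂ(k₁+k₂, k₁k₂, ε_A, ε_Ak₂+ε_Bk₁) pointwise. -/
theorem slow_fast_automorphism :
    ∃ α : K8 ≃ₐ[ℂ] K8,
      α k₁ = k₂ ∧ α k₂ = k₁ ∧ α εA = εA ∧
        α εB = εA + k₁ * (εB - εA) / k₂ ∧
      α.trans α = AlgEquiv.refl ∧
      ∀ x ∈ Subfield.closure
          ((Set.range (algebraMap ℂ K8)) ∪ {k₁ + k₂, k₁ * k₂, εA, εA * k₂ + εB * k₁}),
        α x = x := by
  refine ⟨SlowFastAux.α, αk₁, αk₂, αεA, αεB, ?_, ?_⟩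
  · exact AlgEquiv.ext fun x => αα x
  · intro x hx
    have hsub : (Set.range (algebraMap ℂ K8)) ∪ {k₁ + k₂, k₁ * k₂, εA, εA * k₂ + εB * k₁} ⊆
        (RingHom.eqLocusField (SlowFastAux.α : K8 →+* K8) (RingHom.id K8) : Set K8) := by
      rintro y (⟨c, rfl⟩ | hy)
      · show SlowFastAux.α (algebraMap ℂ K8 c) = RingHom.id K8 (algebraMap ℂ K8 c)
        exact SlowFastAux.α.commutes c
      · simp only [Set.mem_insert_iff, Set.mem_singleton_iff] at hy
        rcases hy with rfl | rfl | rfl | rfl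
        · show SlowFastAux.α (k₁ + k₂) = RingHom.id K8 (k₁ + k₂)
          rw [map_add, αk₁, αk₂, RingHom.id_apply, add_comm]
        · show SlowFastAux.α (k₁ * k₂) = RingHom.id K8 (k₁ * k₂)
          rw [map_mul, αk₁, αk₂, RingHom.id_apply, mul_comm]
        · show SlowFastAux.α εA = RingHom.id K8 εA
          rw [αεA, RingHom.id_apply]
        · show SlowFastAux.α (εA * k₂ + εB * k₁) = RingHom.id K8 (εA * k₂ + εB * k₁)
          rw [map_add, map_mul, map_mul, αk₁, αk₂, αεA, αεB, RingHom.id_apply,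
            add_mul, div_mul_cancel₀ _ hk2]
          ring
    have hmem := Subfield.closure_le.2 hsub hx
    exact hmem
end

section
/- Let K be a differential field and p, q, r ∈ K with the 2×2 matrix [[p, q],[δp, δq]] singular but p, q not both zero. If additionally (r, s) ∈ K² satisfies [[p,q],[δp,δq]]·(r,s)ᵀ = 0 and the kernel of the Wronskian is one-dimensional over K, then (r, s) is a K-multiple of a vector with entries in Const(K). -/
/-- The 2×2 case of "kernels of Wronskians are defined over the constants": if the
Wronskian of `(p, q)` is singular with `(p, q) ≠ 0` and its kernel is one-dimensional over
`K`, then any kernel vector `(r, s)` is a `K`-multiple of a vector of constants. -/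
theorem wronskian_two_kernel_constant
    {K : Type*} [Field K] (δ : K → K)
    (hadd : ∀ x y, δ (x + y) = δ x + δ y)
    (hmul : ∀ x y, δ (x * y) = δ x * y + x * δ y)
    (p q r s : K)
    (hsing : (Matrix.of ![![p, q], ![δ p, δ q]]).det = 0)
    (hpq : ¬(p = 0 ∧ q = 0))
    (hker : (Matrix.of ![![p, q], ![δ p, δ q]]).mulVec ![r, s] = 0)
    (hdim : ∀ v₁ v₂ : Fin 2 → K,
      (Matrix.of ![![p, q], ![δ p, δ q]]).mulVec v₁ = 0 →
      (Matrix.of ![![p, q], ![δ p, δ q]]).mulVec v₂ = 0 →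
      v₂ ≠ 0 → ∃ c : K, v₁ = c • v₂) :
    ∃ (c : K) (w : Fin 2 → K), (∀ i, δ (w i) = 0) ∧ ![r, s] = c • w := by
  have hδ0 : δ 0 = 0 := by
    have h := hadd 0 0
    simp only [add_zero] at h
    exact add_eq_left.mp h.symm
  have hδ1 : δ 1 = 0 := by
    have h := hmul 1 1
    simp only [mul_one, one_mul] at h
    exact add_eq_left.mp h.symm
  have h1 : p * r + q * s = 0 := by
    have h := congr_fun hker 0
    simpa [Matrix.mulVec, dotProduct, Fin.sum_univ_two] using h
  have h2 : δ p * r + δ q * s = 0 := by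
    have h := congr_fun hker 1
    simpa [Matrix.mulVec, dotProduct, Fin.sum_univ_two] using h
  have h3 : p * δ r + q * δ s = 0 := by
    have hd : δ (p * r + q * s) = 0 := by rw [h1, hδ0]
    rw [hadd, hmul, hmul] at hd
    linear_combination hd - h2
  by_cases hs : s = 0
  · refine ⟨r, ![1, 0], ?_, ?_⟩
    · intro i; fin_cases i <;> simpa using (by first | exact hδ1 | exact hδ0)
    · subst hs; funext i; fin_cases i <;> simp
  · by_cases hp : p = 0
    · exfalso
      have hq : q ≠ 0 := fun h => hpq ⟨hp, h⟩
      subst hp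
      simp only [zero_mul, zero_add] at h1
      exact hs ((mul_eq_zero.mp h1).resolve_left hq)
    · have hr : δ r * s = r * δ s := by
        have hcan : p * (δ r * s) = p * (r * δ s) := by
          linear_combination s * h3 - δ s * h1
        exact mul_left_cancel₀ hp hcan
      have hc : δ (r / s) = 0 := by
        have h := hmul s (r / s)
        rw [mul_div_cancel₀ r hs] at h
        have key : r / s * s = r := div_mul_cancel₀ r hs
        have hmain : s * (s * δ (r / s)) = 0 := by
          linear_combination hr - s * h - δ s * key
        exact (mul_eq_zero.mp ((mul_eq_zero.mp hmain).resolve_left hs)).resolve_left hs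
      refine ⟨s, ![r / s, 1], ?_, ?_⟩
      · intro i; fin_cases i
        · exact hc
        · exact hδ1
      · funext i; fin_cases i <;> simp <;> field_simp
end
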